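/- If G and H are finite groups with coprime orders, then d(G × H) = max(d(G), d(H)). -/

import Mathlib

/-- Pad a generating set into a function from `Fin n`. -/
lemma aux_pad {G : Type} [Group G] (S : Finset G) (n : ℕ) (hn : S.card ≤ n)
    (hS : Subgroup.closure (S : Set G) = ⊤) :
    ∃ g : Fin n → G, Subgroup.closure (Set.range g) = ⊤ := by
  refine ⟨fun i => S.toList.getD i 1, ?_⟩
  rw [eq_top_iff, ← hS]
  apply Subgroup.closure_mono
  intro x hx
  obtain ⟨i, hi, hget⟩ := List.getElem_of_mem (Finset.mem_toList.mpr hx)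
  have hlen : S.toList.length = S.card := Finset.length_toList S
  refine ⟨⟨i, lt_of_lt_of_le (hlen ▸ hi) hn⟩, ?_⟩
  simp [List.getD, List.getElem?_eq_getElem (hlen ▸ hi : (i : ℕ) < S.toList.length), hget]

/-- If `G` and `H` are finite groups with coprime orders, then
`d(G × H) = max (d G) (d H)`. -/
theorem stmt_15 (G H : Type) [Group G] [Finite G] [Group H] [Finite H]
    (h : Nat.Coprime (Nat.card G) (Nat.card H)) :
    Group.rank (G × H) = max (Group.rank G) (Group.rank H) := by
  apply le_antisymm
  · -- rank (G × H) ≤ max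
    classical
    set n := max (Group.rank G) (Group.rank H) with hn
    obtain ⟨S, hScard, hS⟩ := Group.rank_spec G
    obtain ⟨T, hTcard, hT⟩ := Group.rank_spec H
    obtain ⟨g, hg⟩ := aux_pad S n (by omega) hS
    obtain ⟨f, hf⟩ := aux_pad T n (by omega) hT
    set s : Fin n → G × H := fun i => (g i, f i) with hs
    have key : Subgroup.closure (Set.range s) = ⊤ := by
      set K := Subgroup.closure (Set.range s) with hK
      have hfst : K.map (MonoidHom.fst G H) = ⊤ := by
        rw [hK, MonoidHom.map_closure, ← Set.range_comp]
        exact hg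
      have hsnd : K.map (MonoidHom.snd G H) = ⊤ := by
        rw [hK, MonoidHom.map_closure, ← Set.range_comp]
        exact hf
      have hdvdG : Nat.card G ∣ Nat.card K := by
        have := Subgroup.card_dvd_of_surjective ((MonoidHom.fst G H).subgroupMap K)
          (MonoidHom.subgroupMap_surjective _ _)
        rwa [hfst, Subgroup.card_top] at this
      have hdvdH : Nat.card H ∣ Nat.card K := by
        have := Subgroup.card_dvd_of_surjective ((MonoidHom.snd G H).subgroupMap K)
          (MonoidHom.subgroupMap_surjective _ _)
        rwa [hsnd, Subgroup.card_top] at this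
      have hdvd : Nat.card G * Nat.card H ∣ Nat.card K := h.mul_dvd_of_dvd_of_dvd hdvdG hdvdH
      apply Subgroup.eq_top_of_card_eq
      have hle : Nat.card K ≤ Nat.card (G × H) := Subgroup.card_le_card_group K
      rw [Nat.card_prod] at hle ⊢
      have hpos : 0 < Nat.card K := Nat.card_pos
      exact le_antisymm hle (Nat.le_of_dvd hpos hdvd)
    have : Subgroup.closure ((Finset.image s Finset.univ : Finset (G × H)) : Set (G × H)) = ⊤ := by
      rwa [Finset.coe_image, Finset.coe_univ, Set.image_univ]
    calc Group.rank (G × H) ≤ (Finset.image s Finset.univ).card := Group.rank_le this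
      _ ≤ n := le_trans (Finset.card_image_le) (by simp)
  · apply max_le
    · exact Group.rank_le_of_surjective (MonoidHom.fst G H) Prod.fst_surjective
    · exact Group.rank_le_of_surjective (MonoidHom.snd G H) Prod.snd_surjective
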